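/- The polytope M_n^k is integrally equivalent to the Gelfand–Tsetlin polytope GT_{λ,μ} with λ = (k,...,k,0,...,0) (k repeated n times, then 0 repeated n times) and μ = (1,...,1,k−1,...,k−1) (1 repeated n times, then k−1 repeated n times). -/

import Mathlib

open scoped BigOperators

/-- Sum along the diagonal `j - i = l` (upper diagonals, `l ≥ 0`). -/
def diagU {n : ℕ} (Y : Matrix (Fin n) (Fin n) ℝ) (l : ℕ) : ℝ :=
  ∑ i : Fin n, ∑ j : Fin n, if (j : ℕ) = (i : ℕ) + l then Y i j else 0

/-- Sum along the diagonal `i - j = l` (lower diagonals). -/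
def diagL {n : ℕ} (Y : Matrix (Fin n) (Fin n) ℝ) (l : ℕ) : ℝ :=
  ∑ i : Fin n, ∑ j : Fin n, if (i : ℕ) = (j : ℕ) + l then Y i j else 0

/-- Membership in the polytope `M_n^k`: entries weakly increasing along rows and
columns, `y_{1,1} ≥ 0`, `y_{n,n} ≤ k`, upper diagonal sums `(1, 2, …, n)` (i.e. the
diagonal `j - i = l` sums to `n - l`) and lower diagonal sums `(n, n-1, …, 1)`. -/
def InM (n k : ℕ) (Y : Matrix (Fin n) (Fin n) ℝ) : Prop :=
  (∀ i i' j j' : Fin n, i ≤ i' → j ≤ j' → Y i j ≤ Y i' j') ∧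
  (∀ h : 0 < n, 0 ≤ Y ⟨0, h⟩ ⟨0, h⟩ ∧
      Y ⟨n - 1, Nat.sub_lt h one_pos⟩ ⟨n - 1, Nat.sub_lt h one_pos⟩ ≤ k) ∧
  (∀ l : Fin n, diagU Y l = ((n - (l : ℕ) : ℕ) : ℝ)) ∧
  (∀ l : Fin n, diagL Y l = ((n - (l : ℕ) : ℕ) : ℝ))

/-- A real matrix with all entries integers. -/
def IsIntegerMatrix {n : ℕ} (X : Matrix (Fin n) (Fin n) ℝ) : Prop :=
  ∀ i j, ∃ m : ℤ, X i j = (m : ℝ)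

/-- Membership in the Gelfand–Tsetlin polytope `GT_{λ,μ}` of size `N`: triangular
arrays (indexed by pairs `i ≤ j`) weakly decreasing along rows and down columns,
with shape (main diagonal) `λ` and content (successive diagonal-sum differences)
`μ`. -/
def InGT (N : ℕ) (lam mu : Fin N → ℝ)
    (g : {p : Fin N × Fin N // p.1 ≤ p.2} → ℝ) : Prop :=
  (∀ p q : {p : Fin N × Fin N // p.1 ≤ p.2},
      p.1.1 ≤ q.1.1 → p.1.2 ≤ q.1.2 → g q ≤ g p) ∧
  (∀ i : Fin N, g ⟨(i, i), le_refl i⟩ = lam i) ∧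
  (∀ m : Fin N,
      (∑ p : {p : Fin N × Fin N // p.1 ≤ p.2},
          if ((p.1.2 : ℕ) : ℤ) - ((p.1.1 : ℕ) : ℤ) = (N : ℤ) - 1 - (m : ℕ) then g p else 0) -
      (∑ p : {p : Fin N × Fin N // p.1 ≤ p.2},
          if ((p.1.2 : ℕ) : ℤ) - ((p.1.1 : ℕ) : ℤ) = (N : ℤ) - (m : ℕ) then g p else 0)
        = mu m)

open Finset

namespace MGT

abbrev Pairs (N : ℕ) := {p : Fin N × Fin N // p.1 ≤ p.2}

/-- totalization of a matrix -/
def Yt {n : ℕ} (Y : Matrix (Fin n) (Fin n) ℝ) (a b : ℕ) : ℝ :=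
  if h : a < n ∧ b < n then Y ⟨a, h.1⟩ ⟨b, h.2⟩ else 0

/-- totalization of a triangular array -/
def gt {N : ℕ} (g : Pairs N → ℝ) (i j : ℕ) : ℝ :=
  if h : i < N ∧ j < N ∧ i ≤ j then g ⟨(⟨i, h.1⟩, ⟨j, h.2.1⟩), h.2.2⟩ else 0

lemma Yt_apply {n : ℕ} (Y : Matrix (Fin n) (Fin n) ℝ) (a b : Fin n) :
    Yt Y a b = Y a b := by
  unfold Yt; rw [dif_pos ⟨a.2, b.2⟩]

lemma gt_val {N : ℕ} (g : Pairs N → ℝ) (p : Pairs N) :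
    gt g p.1.1 p.1.2 = g p := by
  obtain ⟨⟨i, j⟩, h⟩ := p
  unfold gt
  rw [dif_pos ⟨i.2, j.2, h⟩]

lemma fin2_range {m m' : ℕ} (F : ℕ → ℕ → ℝ) :
    (∑ i : Fin m, ∑ j : Fin m', F i j) = ∑ i ∈ range m, ∑ j ∈ range m', F i j := by
  rw [← Fin.sum_univ_eq_sum_range (fun i => ∑ j ∈ range m', F i j) m]
  exact Finset.sum_congr rfl fun i _ => (Fin.sum_univ_eq_sum_range (F i) m')

lemma sum_pin {N c : ℕ} (f : ℕ → ℝ) :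
    (∑ j ∈ range N, if j = c then f j else 0) = if c < N then f c else 0 := by
  rw [Finset.sum_ite_eq' (range N) c f]
  simp

/-- diagonal sums of a triangular array -/
def Tg {N : ℕ} (g : Pairs N → ℝ) (d : ℕ) : ℝ :=
  ∑ i ∈ range N, ∑ j ∈ range N, if j = i + d then gt g i j else 0

lemma Tg_collapse {N : ℕ} (g : Pairs N → ℝ) (d : ℕ) :
    Tg g d = ∑ i ∈ range N, if i + d < N then gt g i (i + d) else 0 := by
  unfold Tg
  exact Finset.sum_congr rfl fun i _ => sum_pin (fun j => gt g i j)

lemma sum_pairs_diag {N : ℕ} (g : Pairs N → ℝ) (d : ℕ) :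
    (∑ p : Pairs N, if (p.1.2 : ℕ) = (p.1.1 : ℕ) + d then g p else 0) = Tg g d := by
  have h1 : Tg g d = ∑ q : Fin N × Fin N,
      (if (q.2 : ℕ) = (q.1 : ℕ) + d then gt g q.1 q.2 else 0) := by
    rw [Fintype.sum_prod_type]
    unfold Tg
    rw [← fin2_range (fun i j => if j = i + d then gt g i j else 0)]
  rw [h1, ← Fintype.sum_subtype_add_sum_subtype (fun q : Fin N × Fin N => q.1 ≤ q.2)
    (fun q => if (q.2 : ℕ) = (q.1 : ℕ) + d then gt g q.1 q.2 else 0)]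
  have h2 : (∑ p : {q : Fin N × Fin N // ¬ q.1 ≤ q.2},
      if ((p : Fin N × Fin N).2 : ℕ) = ((p : Fin N × Fin N).1 : ℕ) + d then
        gt g (p : Fin N × Fin N).1 (p : Fin N × Fin N).2 else 0) = 0 := by
    apply Finset.sum_eq_zero
    intro p _
    have : gt g (p : Fin N × Fin N).1 (p : Fin N × Fin N).2 = 0 := by
      unfold gt
      rw [dif_neg]
      intro h
      exact p.2 (Fin.le_def.mpr h.2.2)
    rw [this]; simp
  rw [h2, add_zero]
  exact Finset.sum_congr rfl fun p _ => by rw [gt_val]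

end MGT

namespace MGT

lemma diagU_eq {n : ℕ} (Y : Matrix (Fin n) (Fin n) ℝ) (l : ℕ) :
    diagU Y l = ∑ b ∈ range n, if l ≤ b then Yt Y (b - l) b else 0 := by
  have h1 : diagU Y l = ∑ a ∈ range n, ∑ b ∈ range n,
      if b = a + l then Yt Y a b else 0 := by
    rw [← fin2_range (fun a b => if b = a + l then Yt Y a b else 0)]
    unfold diagU
    exact Finset.sum_congr rfl fun a _ => Finset.sum_congr rfl fun b _ => by
      rw [Yt_apply]
  rw [h1, Finset.sum_comm]
  refine Finset.sum_congr rfl fun b hb => ?_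
  rw [Finset.mem_range] at hb
  have h2 : ∀ a : ℕ, (b = a + l) ↔ (a = b - l ∧ l ≤ b) := by omega
  calc (∑ a ∈ range n, if b = a + l then Yt Y a b else 0)
      = ∑ a ∈ range n, if a = b - l ∧ l ≤ b then Yt Y a b else 0 :=
        Finset.sum_congr rfl fun a _ => if_congr (h2 a) rfl rfl
    _ = if l ≤ b then Yt Y (b - l) b else 0 := by
        by_cases hlb : l ≤ b
        · simp only [hlb, and_true, if_pos]
          rw [sum_pin (fun a => Yt Y a b), if_pos (by omega)]
        · simp [hlb]

lemma diagL_eq {n : ℕ} (Y : Matrix (Fin n) (Fin n) ℝ) (l : ℕ) :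
    diagL Y l = ∑ b ∈ range n, if b + l < n then Yt Y (b + l) b else 0 := by
  have h1 : diagL Y l = ∑ a ∈ range n, ∑ b ∈ range n,
      if a = b + l then Yt Y a b else 0 := by
    rw [← fin2_range (fun a b => if a = b + l then Yt Y a b else 0)]
    unfold diagL
    exact Finset.sum_congr rfl fun a _ => Finset.sum_congr rfl fun b _ => by
      rw [Yt_apply]
  rw [h1, Finset.sum_comm]
  exact Finset.sum_congr rfl fun b _ => sum_pin (fun a => Yt Y a b)

lemma Yt_add {n : ℕ} (Y Z : Matrix (Fin n) (Fin n) ℝ) (a b : ℕ) :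
    Yt (Y + Z) a b = Yt Y a b + Yt Z a b := by
  unfold Yt; split
  · rw [Matrix.add_apply]
  · ring

lemma Yt_smul {n : ℕ} (c : ℝ) (Y : Matrix (Fin n) (Fin n) ℝ) (a b : ℕ) :
    Yt (c • Y) a b = c * Yt Y a b := by
  unfold Yt; split
  · rw [Matrix.smul_apply, smul_eq_mul]
  · ring

/-- The affine map. -/
noncomputable def Amap (n k : ℕ) : Matrix (Fin n) (Fin n) ℝ →ᵃ[ℝ] (Pairs (2 * n) → ℝ) where
  toFun Y p := (if ((p : Fin (2*n) × Fin (2*n)).2 : ℕ) < n then (k : ℝ) else 0) +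
    (if n ≤ ((p : Fin (2*n) × Fin (2*n)).2 : ℕ) ∧ ((p : Fin (2*n) × Fin (2*n)).1 : ℕ) < n then
      Yt Y (2*n - 1 - ((p : Fin (2*n) × Fin (2*n)).2 : ℕ)) (n - 1 - ((p : Fin (2*n) × Fin (2*n)).1 : ℕ)) else 0)
  linear :=
  { toFun := fun Y p =>
      if n ≤ ((p : Fin (2*n) × Fin (2*n)).2 : ℕ) ∧ ((p : Fin (2*n) × Fin (2*n)).1 : ℕ) < n then
        Yt Y (2*n - 1 - ((p : Fin (2*n) × Fin (2*n)).2 : ℕ)) (n - 1 - ((p : Fin (2*n) × Fin (2*n)).1 : ℕ)) else 0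
    map_add' := by
      intro Y Z
      funext p
      simp only [Pi.add_apply]
      split
      · rw [Yt_add]
      · ring
    map_smul' := by
      intro c Y
      funext p
      simp only [Pi.smul_apply, smul_eq_mul, RingHom.id_apply]
      split
      · rw [Yt_smul]
      · ring }
  map_vadd' := by
    intro Y Z
    funext p
    simp only [vadd_eq_add, Pi.add_apply, Pi.vadd_apply, LinearMap.coe_mk, AddHom.coe_mk]
    split_ifs <;> first | (rw [Yt_add]; ring) | ring

lemma Amap_apply {n k : ℕ} (Y : Matrix (Fin n) (Fin n) ℝ) (p : Pairs (2 * n)) :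
    Amap n k Y p = if (p.1.2 : ℕ) < n then (k : ℝ) else
      (if (p.1.1 : ℕ) < n then Yt Y (2*n - 1 - (p.1.2 : ℕ)) (n - 1 - (p.1.1 : ℕ)) else 0) := by
  show (if ((p.1.2 : ℕ)) < n then (k : ℝ) else 0) +
      (if n ≤ (p.1.2 : ℕ) ∧ (p.1.1 : ℕ) < n then
        Yt Y (2*n - 1 - (p.1.2 : ℕ)) (n - 1 - (p.1.1 : ℕ)) else 0) = _
  by_cases h1 : (p.1.2 : ℕ) < n
  · rw [if_pos h1, if_pos h1, if_neg (by omega)]; ring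
  · rw [if_neg h1, if_neg h1]
    by_cases h2 : (p.1.1 : ℕ) < n
    · rw [if_pos ⟨by omega, h2⟩, if_pos h2]; ring
    · rw [if_neg (fun hh => h2 hh.2), if_neg h2]; ring

end MGT

namespace MGT

lemma gt_Amap {n k : ℕ} (Y : Matrix (Fin n) (Fin n) ℝ) (i j : ℕ) :
    gt (Amap n k Y) i j = if i < 2*n ∧ j < 2*n ∧ i ≤ j then
      (if j < n then (k : ℝ) else if i < n then Yt Y (2*n - 1 - j) (n - 1 - i) else 0)
      else 0 := by
  unfold gt
  split
  · next h => exact Amap_apply Y _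
  · next h => rfl

def Mid {n : ℕ} (Y : Matrix (Fin n) (Fin n) ℝ) (d : ℕ) : ℝ :=
  ∑ i ∈ range (2*n), if n ≤ i + d ∧ i < n ∧ i + d < 2*n then
    Yt Y (2*n - 1 - (i + d)) (n - 1 - i) else 0

lemma sum_indicator_lt (M c : ℕ) (x : ℝ) :
    (∑ i ∈ range M, if i < c then x else 0) = ((min c M : ℕ) : ℝ) * x := by
  induction M with
  | zero => simp
  | succ M ih =>
    rw [Finset.sum_range_succ, ih]
    by_cases h : M < c
    · rw [if_pos h]
      have he : min c (M + 1) = min c M + 1 := by omega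
      rw [he]; push_cast; ring
    · rw [if_neg h]
      have he : min c (M + 1) = min c M := by omega
      rw [he]; ring

lemma Tg_Amap {n k : ℕ} (Y : Matrix (Fin n) (Fin n) ℝ) (d : ℕ) :
    Tg (Amap n k Y) d = (k : ℝ) * ((n - d : ℕ) : ℝ) + Mid Y d := by
  rw [Tg_collapse]
  have h1 : ∀ i ∈ range (2*n), (if i + d < 2*n then gt (Amap n k Y) i (i + d) else 0)
      = (if i + d < n then (k : ℝ) else 0) +
        (if n ≤ i + d ∧ i < n ∧ i + d < 2*n then Yt Y (2*n - 1 - (i + d)) (n - 1 - i) else 0) := by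
    intro i hi
    rw [Finset.mem_range] at hi
    rw [gt_Amap]
    by_cases h2 : i + d < 2*n
    · rw [if_pos h2, if_pos ⟨hi, h2, Nat.le_add_right _ _⟩]
      by_cases h3 : i + d < n
      · rw [if_pos h3, if_pos h3, if_neg (by omega)]; ring
      · rw [if_neg h3, if_neg h3]
        by_cases h4 : i < n
        · rw [if_pos h4, if_pos ⟨by omega, h4, h2⟩]; ring
        · rw [if_neg h4, if_neg (by omega)]; ring
    · rw [if_neg h2, if_neg (by omega), if_neg (by omega)]; ring
  rw [Finset.sum_congr rfl h1, Finset.sum_add_distrib]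
  congr 1
  have h3 : ∀ i ∈ range (2*n),
      (if i + d < n then (k : ℝ) else 0) = (if i < n - d then (k : ℝ) else 0) :=
    fun i _ => if_congr (by omega) rfl rfl
  rw [Finset.sum_congr rfl h3, sum_indicator_lt]
  have h4 : min (n - d) (2*n) = n - d := by omega
  rw [h4]; ring

lemma Mid_eq_rangen {n : ℕ} (Y : Matrix (Fin n) (Fin n) ℝ) (d : ℕ) :
    Mid Y d = ∑ i ∈ range n, if n ≤ i + d ∧ i + d < 2*n then
      Yt Y (2*n - 1 - (i + d)) (n - 1 - i) else 0 := by
  unfold Mid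
  rw [Finset.range_eq_Ico,
    ← Finset.sum_Ico_consecutive _ (Nat.zero_le n) (by omega : n ≤ 2*n)]
  have h2 : (∑ i ∈ Finset.Ico n (2*n), if n ≤ i + d ∧ i < n ∧ i + d < 2*n then
      Yt Y (2*n - 1 - (i + d)) (n - 1 - i) else 0) = 0 := by
    refine Finset.sum_eq_zero fun i hi => ?_
    rw [Finset.mem_Ico] at hi
    exact if_neg (by omega)
  rw [h2, add_zero, ← Finset.range_eq_Ico]
  refine Finset.sum_congr rfl fun i hi => ?_
  rw [Finset.mem_range] at hi
  exact if_congr (by omega) rfl rfl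

lemma Mid_L {n : ℕ} (Y : Matrix (Fin n) (Fin n) ℝ) {d : ℕ} (hd : d ≤ n) :
    Mid Y d = ∑ b ∈ range n, if b + (n - d) < n then Yt Y (b + (n - d)) b else 0 := by
  rw [Mid_eq_rangen,
    ← Finset.sum_range_reflect (fun b => if b + (n - d) < n then Yt Y (b + (n - d)) b else 0) n]
  refine Finset.sum_congr rfl fun i hi => ?_
  rw [Finset.mem_range] at hi
  have e1 : n - 1 - i + (n - d) = 2*n - 1 - (i + d) := by omega
  rw [e1]
  exact if_congr (by omega) rfl rfl

lemma Mid_U {n : ℕ} (Y : Matrix (Fin n) (Fin n) ℝ) {d : ℕ} (hd : n ≤ d) :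
    Mid Y d = ∑ b ∈ range n, if d - n ≤ b then Yt Y (b - (d - n)) b else 0 := by
  rw [Mid_eq_rangen,
    ← Finset.sum_range_reflect (fun b => if d - n ≤ b then Yt Y (b - (d - n)) b else 0) n]
  refine Finset.sum_congr rfl fun i hi => ?_
  rw [Finset.mem_range] at hi
  have e1 : n - 1 - i - (d - n) = 2*n - 1 - (i + d) := by omega
  rw [e1]
  exact if_congr (by omega) rfl rfl

lemma Mid_val_L {n : ℕ} (Y : Matrix (Fin n) (Fin n) ℝ)
    (hL : ∀ l : Fin n, diagL Y l = ((n - (l : ℕ) : ℕ) : ℝ))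
    {d : ℕ} (hd : d ≤ n) (hn : 0 < n) : Mid Y d = (d : ℝ) := by
  rcases Nat.eq_zero_or_pos d with h0 | h0
  · subst h0
    rw [Mid_L Y (Nat.zero_le n)]
    rw [Finset.sum_eq_zero fun b hb => if_neg (by omega)]
    simp
  · rw [Mid_L Y hd, ← diagL_eq Y (n - d), hL ⟨n - d, by omega⟩]
    have e : n - ((⟨n - d, by omega⟩ : Fin n) : ℕ) = d := by
      simp only [Fin.val_mk]; omega
    rw [e]

lemma Mid_val_U {n : ℕ} (Y : Matrix (Fin n) (Fin n) ℝ)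
    (hU : ∀ l : Fin n, diagU Y l = ((n - (l : ℕ) : ℕ) : ℝ))
    {d : ℕ} (hd : n ≤ d) (hd2 : d ≤ 2*n) (hn : 0 < n) :
    Mid Y d = ((2*n - d : ℕ) : ℝ) := by
  rcases eq_or_lt_of_le hd2 with h0 | h0
  · subst h0
    rw [Mid_U Y hd]
    rw [Finset.sum_eq_zero fun b hb => if_neg (by rw [Finset.mem_range] at hb; omega)]
    simp
  · rw [Mid_U Y hd, ← diagU_eq Y (d - n), hU ⟨d - n, by omega⟩]
    have e : n - ((⟨d - n, by omega⟩ : Fin n) : ℕ) = 2*n - d := by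
      simp only [Fin.val_mk]; omega
    rw [e]

end MGT

namespace MGT

lemma content_sum {N : ℕ} (g : Pairs N → ℝ) (z : ℤ) (d : ℕ) (hz : z = (d : ℤ)) :
    (∑ p : Pairs N, if ((p.1.2 : ℕ) : ℤ) - ((p.1.1 : ℕ) : ℤ) = z then g p else 0) = Tg g d := by
  subst hz
  rw [← sum_pairs_diag g d]
  exact Finset.sum_congr rfl fun p _ => if_congr (by omega) rfl rfl

lemma forward {n k : ℕ} (hn : 0 < n) (Y : Matrix (Fin n) (Fin n) ℝ) (hY : InM n k Y) :
    InGT (2*n) (fun i => if (i : ℕ) < n then (k : ℝ) else 0)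
      (fun i => if (i : ℕ) < n then 1 else (k : ℝ) - 1) (Amap n k Y) := by
  obtain ⟨hmono, hcorner, hU, hL⟩ := hY
  obtain ⟨hc0, hck⟩ := hcorner hn
  have hYb : ∀ a b : Fin n, 0 ≤ Y a b ∧ Y a b ≤ k := by
    intro a b
    constructor
    · exact le_trans hc0 (hmono ⟨0, hn⟩ a ⟨0, hn⟩ b
        (Fin.le_def.mpr (Nat.zero_le _)) (Fin.le_def.mpr (Nat.zero_le _)))
    · exact le_trans (hmono a ⟨n-1, by omega⟩ b ⟨n-1, by omega⟩
        (Fin.le_def.mpr (by have := a.2; simp only [Fin.val_mk]; omega))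
        (Fin.le_def.mpr (by have := b.2; simp only [Fin.val_mk]; omega))) hck
  have hYt : ∀ a b : ℕ, 0 ≤ Yt Y a b ∧ Yt Y a b ≤ k := by
    intro a b; unfold Yt; split
    · exact hYb _ _
    · exact ⟨le_refl 0, by positivity⟩
  have hbounds : ∀ p : Pairs (2*n), 0 ≤ Amap n k Y p ∧ Amap n k Y p ≤ k := by
    intro p; rw [Amap_apply]; split_ifs
    · exact ⟨by positivity, le_refl _⟩
    · exact hYt _ _
    · exact ⟨le_refl 0, by positivity⟩
  refine ⟨?_, ?_, ?_⟩
  · -- monotone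
    intro p q h1 h2
    replace h1 := Fin.le_def.mp h1
    replace h2 := Fin.le_def.mp h2
    by_cases hq2 : (q.1.2 : ℕ) < n
    · rw [Amap_apply, Amap_apply, if_pos hq2, if_pos (by omega : (p.1.2 : ℕ) < n)]
    · by_cases hq1 : (q.1.1 : ℕ) < n
      · by_cases hp2 : (p.1.2 : ℕ) < n
        · calc Amap n k Y q ≤ k := (hbounds q).2
            _ = Amap n k Y p := by rw [Amap_apply, if_pos hp2]
        · have hp1 : (p.1.1 : ℕ) < n := by omega
          rw [Amap_apply, Amap_apply, if_neg hq2, if_neg hp2, if_pos hq1, if_pos hp1]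
          have hq2' : (q.1.2 : ℕ) < 2*n := q.1.2.2
          have hp2' : (p.1.2 : ℕ) < 2*n := p.1.2.2
          unfold Yt
          rw [dif_pos ⟨by omega, by omega⟩, dif_pos ⟨(by omega : 2*n - 1 - (p.1.2:ℕ) < n), by omega⟩]
          exact hmono _ _ _ _ (Fin.le_def.mpr (by simp only [Fin.val_mk]; omega))
            (Fin.le_def.mpr (by simp only [Fin.val_mk]; omega))
      · calc Amap n k Y q = 0 := by
              rw [Amap_apply, if_neg hq2, if_neg hq1]
          _ ≤ Amap n k Y p := (hbounds p).1
  · -- main diagonal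
    intro i
    rw [Amap_apply]
    simp only []
    split_ifs <;> rfl
  · -- content
    intro m
    have hm : (m : ℕ) < 2*n := m.2
    rw [content_sum _ _ (2*n - 1 - (m : ℕ)) (by push_cast; omega),
        content_sum _ _ (2*n - (m : ℕ)) (by push_cast; omega),
        Tg_Amap, Tg_Amap]
    show _ = if (m : ℕ) < n then (1 : ℝ) else (k : ℝ) - 1
    by_cases hmn : (m : ℕ) < n
    · rw [Mid_val_U Y hU (d := 2*n - 1 - (m : ℕ)) (by omega) (by omega) hn,
          Mid_val_U Y hU (d := 2*n - (m : ℕ)) (by omega) (by omega) hn]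
      have e1 : (n - (2*n - 1 - (m : ℕ)) : ℕ) = 0 := by omega
      have e2 : (n - (2*n - (m : ℕ)) : ℕ) = 0 := by omega
      have e3 : (2*n - (2*n - 1 - (m : ℕ)) : ℕ) = (m : ℕ) + 1 := by omega
      have e4 : (2*n - (2*n - (m : ℕ)) : ℕ) = (m : ℕ) := by omega
      rw [e1, e2, e3, e4, if_pos hmn]
      push_cast; ring
    · rw [Mid_val_L Y hL (d := 2*n - 1 - (m : ℕ)) (by omega) hn,
          Mid_val_L Y hL (d := 2*n - (m : ℕ)) (by omega) hn]
      rw [if_neg hmn]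
      have e1 : (2*n - (m : ℕ)) = (2*n - 1 - (m : ℕ)) + 1 := by omega
      rw [e1]
      have e3 : (n - (2*n - 1 - (m : ℕ)) : ℕ) = (n - (2*n - 1 - (m : ℕ) + 1) : ℕ) + 1 := by
        omega
      rw [e3]
      push_cast; ring

end MGT

namespace MGT

section Rev
variable {n k : ℕ}

lemma forced_k (g : Pairs (2*n) → ℝ)
    (hmono : ∀ p q : Pairs (2*n), p.1.1 ≤ q.1.1 → p.1.2 ≤ q.1.2 → g q ≤ g p)
    (hdiag : ∀ i : Fin (2*n), g ⟨(i, i), le_refl i⟩ = if (i : ℕ) < n then (k : ℝ) else 0)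
    (p : Pairs (2*n)) (h : (p.1.2 : ℕ) < n) : g p = k := by
  obtain ⟨⟨i, j⟩, hij⟩ := p
  replace h : (j : ℕ) < n := h
  have h1 : g ⟨(i, j), hij⟩ ≤ g ⟨(i, i), le_refl i⟩ :=
    hmono ⟨(i, i), le_refl i⟩ ⟨(i, j), hij⟩ (le_refl i) hij
  have h2 : g ⟨(j, j), le_refl j⟩ ≤ g ⟨(i, j), hij⟩ :=
    hmono ⟨(i, j), hij⟩ ⟨(j, j), le_refl j⟩ hij (le_refl j)
  rw [hdiag i] at h1
  rw [hdiag j] at h2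
  rw [if_pos h] at h2
  rw [if_pos (lt_of_le_of_lt (Fin.le_def.mp hij) h : (i : ℕ) < n)] at h1
  exact le_antisymm h1 h2

lemma forced_0 (g : Pairs (2*n) → ℝ)
    (hmono : ∀ p q : Pairs (2*n), p.1.1 ≤ q.1.1 → p.1.2 ≤ q.1.2 → g q ≤ g p)
    (hdiag : ∀ i : Fin (2*n), g ⟨(i, i), le_refl i⟩ = if (i : ℕ) < n then (k : ℝ) else 0)
    (p : Pairs (2*n)) (h : n ≤ (p.1.1 : ℕ)) : g p = 0 := by
  obtain ⟨⟨i, j⟩, hij⟩ := p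
  replace h : n ≤ (i : ℕ) := h
  have h1 : g ⟨(i, j), hij⟩ ≤ g ⟨(i, i), le_refl i⟩ :=
    hmono ⟨(i, i), le_refl i⟩ ⟨(i, j), hij⟩ (le_refl i) hij
  have h2 : g ⟨(j, j), le_refl j⟩ ≤ g ⟨(i, j), hij⟩ :=
    hmono ⟨(i, j), hij⟩ ⟨(j, j), le_refl j⟩ hij (le_refl j)
  rw [hdiag i, if_neg (by omega)] at h1
  rw [hdiag j, if_neg (not_lt.mpr (le_trans h (Fin.le_def.mp hij)))] at h2
  exact le_antisymm h1 h2

/-- inverse map -/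
def Psi (g : Pairs (2*n) → ℝ) : Matrix (Fin n) (Fin n) ℝ :=
  Matrix.of fun a b => gt g (n - 1 - (b : ℕ)) (2*n - 1 - (a : ℕ))

lemma Amap_Psi (hn : 0 < n) (g : Pairs (2*n) → ℝ)
    (hmono : ∀ p q : Pairs (2*n), p.1.1 ≤ q.1.1 → p.1.2 ≤ q.1.2 → g q ≤ g p)
    (hdiag : ∀ i : Fin (2*n), g ⟨(i, i), le_refl i⟩ = if (i : ℕ) < n then (k : ℝ) else 0) :
    Amap n k (Psi g) = g := by
  funext p
  rw [Amap_apply]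
  by_cases h2 : (p.1.2 : ℕ) < n
  · rw [if_pos h2]; exact (forced_k g hmono hdiag p h2).symm
  · rw [if_neg h2]
    by_cases h1 : (p.1.1 : ℕ) < n
    · rw [if_pos h1]
      unfold Yt Psi
      have hp2 : (p.1.2 : ℕ) < 2*n := p.1.2.2
      rw [dif_pos ⟨by omega, by omega⟩, Matrix.of_apply]
      simp only [Fin.val_mk]
      have e1 : n - 1 - (n - 1 - (p.1.1 : ℕ)) = (p.1.1 : ℕ) := by omega
      have e2 : 2*n - 1 - (2*n - 1 - (p.1.2 : ℕ)) = (p.1.2 : ℕ) := by omega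
      rw [e1, e2]
      exact gt_val g p
    · rw [if_neg h1]; exact (forced_0 g hmono hdiag p (by omega)).symm

lemma telescope (g : Pairs (2*n) → ℝ)
    (hc : ∀ m : Fin (2*n),
      Tg g (2*n - 1 - (m : ℕ)) - Tg g (2*n - (m : ℕ)) = if (m : ℕ) < n then 1 else (k : ℝ) - 1) :
    ∀ m : ℕ, m ≤ 2*n →
      Tg g (2*n - m) = if m ≤ n then (m : ℝ) else (n : ℝ) + ((m - n : ℕ) : ℝ) * ((k : ℝ) - 1) := by
  intro m
  induction m with
  | zero =>
    intro _
    rw [Nat.sub_zero, if_pos (Nat.zero_le n), Tg_collapse,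
      Finset.sum_eq_zero fun i hi => if_neg (by rw [Finset.mem_range] at hi; omega)]
    simp
  | succ m ih =>
    intro hm1
    have hm : m < 2*n := by omega
    have h := hc ⟨m, hm⟩
    simp only [Fin.val_mk] at h
    have e : 2*n - 1 - m = 2*n - (m+1) := by omega
    rw [e] at h
    have ihv := ih (by omega)
    have hstep : Tg g (2*n - (m+1)) = Tg g (2*n - m) + (if m < n then 1 else (k : ℝ) - 1) := by
      rw [← h]; ring
    rw [hstep, ihv]
    by_cases h1 : m + 1 ≤ n
    · rw [if_pos h1, if_pos (by omega), if_pos (by omega)]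
      push_cast; ring
    · rw [if_neg h1]
      by_cases h2 : m ≤ n
      · rw [if_pos h2, if_neg (by omega : ¬ m < n)]
        have e2 : (m + 1 - n : ℕ) = 1 := by omega
        rw [e2, show m = n from by omega]
        push_cast; ring
      · rw [if_neg h2, if_neg (by omega : ¬ m < n)]
        have e2 : (m + 1 - n : ℕ) = (m - n) + 1 := by omega
        rw [e2]
        push_cast; ring

end Rev
end MGT

namespace MGT

lemma reverse {n k : ℕ} (hn : 0 < n) (g : Pairs (2*n) → ℝ)
    (hg : InGT (2*n) (fun i => if (i : ℕ) < n then (k : ℝ) else 0)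
      (fun i => if (i : ℕ) < n then 1 else (k : ℝ) - 1) g) :
    InM n k (Psi g) ∧ Amap n k (Psi g) = g := by
  obtain ⟨hmono, hdiag0, hcont⟩ := hg
  have hdiag : ∀ i : Fin (2*n), g ⟨(i, i), le_refl i⟩ = if (i : ℕ) < n then (k : ℝ) else 0 :=
    hdiag0
  have hA := Amap_Psi hn g hmono hdiag
  have hc : ∀ m : Fin (2*n),
      Tg g (2*n - 1 - (m : ℕ)) - Tg g (2*n - (m : ℕ)) = if (m : ℕ) < n then 1 else (k : ℝ) - 1 := by
    intro m
    have h := hcont m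
    rw [content_sum g _ (2*n - 1 - (m : ℕ)) (by have := m.2; omega),
        content_sum g _ (2*n - (m : ℕ)) (by have := m.2; omega)] at h
    exact h
  have ht := telescope (k := k) g hc
  refine ⟨⟨?_, ?_, ?_, ?_⟩, hA⟩
  · -- monotone
    intro a a' b b' ha hb
    show Psi g a b ≤ Psi g a' b'
    have ha2 := a.2; have ha2' := a'.2; have hb2 := b.2; have hb2' := b'.2
    have hav := Fin.le_def.mp ha
    have hbv := Fin.le_def.mp hb
    unfold Psi
    rw [Matrix.of_apply, Matrix.of_apply]
    unfold gt
    rw [dif_pos (⟨by omega, by omega, by omega⟩ :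
          n - 1 - (b : ℕ) < 2*n ∧ 2*n - 1 - (a : ℕ) < 2*n ∧ n - 1 - (b : ℕ) ≤ 2*n - 1 - (a : ℕ)),
        dif_pos (⟨by omega, by omega, by omega⟩ :
          n - 1 - (b' : ℕ) < 2*n ∧ 2*n - 1 - (a' : ℕ) < 2*n ∧ n - 1 - (b' : ℕ) ≤ 2*n - 1 - (a' : ℕ))]
    exact hmono _ _ (Fin.mk_le_mk.mpr (by omega)) (Fin.mk_le_mk.mpr (by omega))
  · -- corners
    intro h0
    constructor
    · show (0 : ℝ) ≤ Psi g ⟨0, h0⟩ ⟨0, h0⟩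
      unfold Psi
      rw [Matrix.of_apply]
      simp only [Fin.val_mk, Nat.sub_zero]
      unfold gt
      rw [dif_pos (⟨by omega, by omega, by omega⟩ :
            n - 1 < 2*n ∧ 2*n - 1 < 2*n ∧ n - 1 ≤ 2*n - 1)]
      have h1 := hmono ⟨(⟨n-1, by omega⟩, ⟨2*n-1, by omega⟩), Fin.mk_le_mk.mpr (by omega)⟩
        ⟨(⟨2*n-1, by omega⟩, ⟨2*n-1, by omega⟩), le_refl _⟩
        (Fin.mk_le_mk.mpr (by omega)) (le_refl _)
      have h2 := hdiag ⟨2*n-1, by omega⟩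
      rw [if_neg (by simp only [Fin.val_mk]; omega)] at h2
      calc (0 : ℝ) = g ⟨(⟨2*n-1, by omega⟩, ⟨2*n-1, by omega⟩), le_refl _⟩ := h2.symm
        _ ≤ _ := h1
    · show Psi g ⟨n-1, _⟩ ⟨n-1, _⟩ ≤ (k : ℝ)
      unfold Psi
      rw [Matrix.of_apply]
      simp only [Fin.val_mk]
      rw [show n - 1 - (n - 1) = 0 from by omega, show 2*n - 1 - (n - 1) = n from by omega]
      unfold gt
      rw [dif_pos (⟨by omega, by omega, by omega⟩ : 0 < 2*n ∧ n < 2*n ∧ 0 ≤ n)]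
      have h1 := hmono ⟨(⟨0, by omega⟩, ⟨0, by omega⟩), le_refl _⟩
        ⟨(⟨0, by omega⟩, ⟨n, by omega⟩), Fin.mk_le_mk.mpr (by omega)⟩
        (le_refl _) (Fin.mk_le_mk.mpr (by omega))
      have h2 := hdiag ⟨0, by omega⟩
      rw [if_pos (by simp only [Fin.val_mk]; omega)] at h2
      calc _ ≤ g ⟨(⟨0, by omega⟩, ⟨0, by omega⟩), le_refl _⟩ := h1
        _ = (k : ℝ) := h2
  · -- diagU
    intro l
    have hl := l.2
    have h1 := Mid_U (Psi g) (d := n + (l : ℕ)) (Nat.le_add_right n _)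
    rw [show n + (l : ℕ) - n = (l : ℕ) from by omega] at h1
    have h2 := Tg_Amap (k := k) (Psi g) (n + (l : ℕ))
    rw [hA, show n - (n + (l : ℕ)) = 0 from by omega] at h2
    simp only [Nat.cast_zero, mul_zero, zero_add] at h2
    have h3 := ht (n - (l : ℕ)) (by omega)
    rw [show 2*n - (n - (l : ℕ)) = n + (l : ℕ) from by omega,
        if_pos (by omega : n - (l : ℕ) ≤ n)] at h3
    rw [diagU_eq, ← h1, ← h2, h3]
  · -- diagL
    intro l
    have hl := l.2
    have h1 := Mid_L (Psi g) (d := n - (l : ℕ)) (Nat.sub_le n _)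
    rw [show n - (n - (l : ℕ)) = (l : ℕ) from by omega] at h1
    have h2 := Tg_Amap (k := k) (Psi g) (n - (l : ℕ))
    rw [hA, show n - (n - (l : ℕ)) = (l : ℕ) from by omega] at h2
    have h3 := ht (n + (l : ℕ)) (by omega)
    rw [show 2*n - (n + (l : ℕ)) = n - (l : ℕ) from by omega] at h3
    have h4 : Tg g (n - (l : ℕ)) = (n : ℝ) + ((l : ℕ) : ℝ) * ((k : ℝ) - 1) := by
      rw [h3]
      by_cases hl0 : n + (l : ℕ) ≤ n
      · rw [if_pos hl0, show (l : ℕ) = 0 from by omega]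
        push_cast; ring
      · rw [if_neg hl0, show n + (l : ℕ) - n = (l : ℕ) from by omega]
    rw [diagL_eq, ← h1, Nat.cast_sub hl.le]
    linarith [h2, h4]

end MGT

namespace MGT

lemma Amap_mid {n k : ℕ} (hn : 0 < n) (Y : Matrix (Fin n) (Fin n) ℝ) (a b : Fin n) :
    Amap n k Y ⟨(⟨n - 1 - (b : ℕ), by omega⟩, ⟨2*n - 1 - (a : ℕ), by omega⟩),
      Fin.mk_le_mk.mpr (by have := a.2; have := b.2; omega)⟩ = Y a b := by
  have ha := a.2; have hb := b.2
  rw [Amap_apply]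
  simp only [Fin.val_mk]
  rw [if_neg (by omega), if_pos (by omega)]
  rw [show 2*n - 1 - (2*n - 1 - (a : ℕ)) = (a : ℕ) from by omega,
      show n - 1 - (n - 1 - (b : ℕ)) = (b : ℕ) from by omega]
  unfold Yt
  rw [dif_pos ⟨ha, hb⟩]

lemma Amap_inj {n k : ℕ} (hn : 0 < n) : Function.Injective (Amap n k) := by
  intro Y Z h
  ext a b
  calc Y a b = Amap n k Y ⟨(⟨n - 1 - (b : ℕ), by omega⟩, ⟨2*n - 1 - (a : ℕ), by omega⟩),
        Fin.mk_le_mk.mpr (by have := a.2; have := b.2; omega)⟩ := (Amap_mid hn Y a b).symm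
    _ = Amap n k Z ⟨(⟨n - 1 - (b : ℕ), by omega⟩, ⟨2*n - 1 - (a : ℕ), by omega⟩),
        Fin.mk_le_mk.mpr (by have := a.2; have := b.2; omega)⟩ := by rw [h]
    _ = Z a b := Amap_mid hn Z a b

end MGT

/-- `M_n^k` is integrally equivalent to `GT_{λ,μ}` with `λ = (k^n, 0^n)` and
`μ = (1^n, (k-1)^n)`: some affine map restricts to a bijection between the polytopes
and to a bijection between the lattice points of their affine spans. -/
theorem M_integrallyEquivalent_GT (n k : ℕ) (hn : 0 < n) (hk : 1 ≤ k) (hkn : k ≤ n) :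
    ∃ A : Matrix (Fin n) (Fin n) ℝ →ᵃ[ℝ]
        ({p : Fin (2 * n) × Fin (2 * n) // p.1 ≤ p.2} → ℝ),
      Set.BijOn A {Y | InM n k Y}
        {g | InGT (2 * n) (fun i => if (i : ℕ) < n then (k : ℝ) else 0)
              (fun i => if (i : ℕ) < n then 1 else (k : ℝ) - 1) g} ∧
      Set.BijOn A
        ((affineSpan ℝ {Y | InM n k Y} : Set (Matrix (Fin n) (Fin n) ℝ)) ∩
          {Y | IsIntegerMatrix Y})
        ((affineSpan ℝ {g | InGT (2 * n) (fun i => if (i : ℕ) < n then (k : ℝ) else 0)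
              (fun i => if (i : ℕ) < n then 1 else (k : ℝ) - 1) g} :
            Set ({p : Fin (2 * n) × Fin (2 * n) // p.1 ≤ p.2} → ℝ)) ∩
          {g | ∀ p, ∃ m : ℤ, g p = (m : ℝ)}) := by
  classical
  refine ⟨MGT.Amap n k, ?_, ?_⟩
  case _ =>
    refine ⟨fun Y hY => MGT.forward hn Y hY, (MGT.Amap_inj hn).injOn, ?_⟩
    intro g hg
    exact ⟨MGT.Psi g, (MGT.reverse hn g hg).1, (MGT.reverse hn g hg).2⟩
  case _ =>
    have bij1 : Set.BijOn (MGT.Amap n k) {Y | InM n k Y}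
        {g | InGT (2 * n) (fun i => if (i : ℕ) < n then (k : ℝ) else 0)
              (fun i => if (i : ℕ) < n then 1 else (k : ℝ) - 1) g} := by
      refine ⟨fun Y hY => MGT.forward hn Y hY, (MGT.Amap_inj hn).injOn, ?_⟩
      intro g hg
      exact ⟨MGT.Psi g, (MGT.reverse hn g hg).1, (MGT.reverse hn g hg).2⟩
    have hspan : (affineSpan ℝ {g | InGT (2 * n) (fun i => if (i : ℕ) < n then (k : ℝ) else 0)
          (fun i => if (i : ℕ) < n then 1 else (k : ℝ) - 1) g} :
            Set ({p : Fin (2 * n) × Fin (2 * n) // p.1 ≤ p.2} → ℝ))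
        = (MGT.Amap n k) '' (affineSpan ℝ {Y | InM n k Y} :
            Set (Matrix (Fin n) (Fin n) ℝ)) := by
      rw [← bij1.image_eq, ← AffineSubspace.map_span, AffineSubspace.coe_map]
    refine ⟨?_, (MGT.Amap_inj hn).injOn, ?_⟩
    · rintro Y ⟨hY1, hY2⟩
      constructor
      · rw [hspan]
        exact ⟨Y, hY1, rfl⟩
      · intro p
        rw [MGT.Amap_apply]
        split_ifs
        · exact ⟨(k : ℤ), by push_cast; ring⟩
        · unfold MGT.Yt
          split
          · exact hY2 _ _
          · exact ⟨0, by norm_num⟩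
        · exact ⟨0, by norm_num⟩
    · rintro g ⟨hg1, hg2⟩
      rw [hspan] at hg1
      obtain ⟨Y, hYspan, rfl⟩ := hg1
      refine ⟨Y, ⟨hYspan, ?_⟩, rfl⟩
      intro a b
      obtain ⟨m, hm⟩ := hg2 ⟨(⟨n - 1 - (b : ℕ), by omega⟩, ⟨2*n - 1 - (a : ℕ), by omega⟩),
        Fin.mk_le_mk.mpr (by have := a.2; have := b.2; omega)⟩
      exact ⟨m, (MGT.Amap_mid hn Y a b).symm.trans hm⟩
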